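/- Let V be a vector space of countable infinite dimension over a field K and T : V → V a linear map such that span{Tᵏ(L) : k ∈ ℕ} = V for some finite-dimensional subspace L. Then T is not surjective. -/

import Mathlib

open Polynomial Module

/-- A multicyclic linear operator on a vector space of countably infinite
dimension is not surjective. -/
theorem stmt_6 {K : Type*} [Field K] {V : Type*} [AddCommGroup V] [Module K V]
    (hdim : Module.rank K V = Cardinal.aleph0)
    (T : Module.End K V) (L : Submodule K V) (hL : Module.Finite K L)
    (hmc : Submodule.span K (⋃ n : ℕ, (T ^ n) '' (L : Set V)) = ⊤) :
    ¬ Function.Surjective T := by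
  classical
  intro hsurj
  have hLfg : L.FG := Module.Finite.iff_fg.mp hL
  obtain ⟨s, hs⟩ := hLfg
  set e : V ≃ₗ[K] Module.AEval' T := Module.AEval'.of T with he
  -- the AEval' module is finitely generated over K[X]
  have hfg : (⊤ : Submodule K[X] (Module.AEval' T)).FG := by
    refine ⟨s.image e, le_antisymm le_top ?_⟩
    set N := Submodule.span K[X] ((s.image e : Finset (Module.AEval' T)) : Set (Module.AEval' T))
      with hN
    set N' : Submodule K V := (N.restrictScalars K).comap (e : V →ₗ[K] Module.AEval' T) with hN'
    have hTN' : ∀ v ∈ N', T v ∈ N' := by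
      intro v hv
      have hx : e (T v) = (X : K[X]) • e v := (Module.AEval'.X_smul_of T v).symm
      simp only [hN', Submodule.mem_comap, LinearEquiv.coe_coe, hx] at *
      exact N.smul_mem X hv
    have hLN' : L ≤ N' := by
      rw [← hs, Submodule.span_le]
      intro x hx
      have : e x ∈ N := Submodule.subset_span (by
        simp only [Finset.coe_image, Set.mem_image, Finset.mem_coe]
        exact ⟨x, hx, rfl⟩)
      simpa [hN'] using this
    have hpow : ∀ n : ℕ, ∀ x ∈ L, (T ^ n) x ∈ N' := by
      intro n
      induction n with
      | zero => intro x hx; simpa using hLN' hx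
      | succ n ih =>
        intro x hx
        have : (T ^ (n + 1)) x = T ((T ^ n) x) := by
          rw [pow_succ']; rfl
        rw [this]
        exact hTN' _ (ih x hx)
    have htop : (⊤ : Submodule K V) ≤ N' := by
      rw [← hmc, Submodule.span_le]
      rintro _ ⟨_, ⟨n, rfl⟩, x, hx, rfl⟩
      exact hpow n x hx
    intro m _
    have := htop (x := e.symm m) trivial
    simpa [hN'] using this
  -- Nakayama: the ideal (X) satisfies (X) • ⊤ = ⊤ since T is surjective
  have hin : (⊤ : Submodule K[X] (Module.AEval' T)) ≤ Ideal.span {(X : K[X])} • ⊤ := by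
    intro m _
    obtain ⟨w, hw⟩ := hsurj (e.symm m)
    have hm : m = (X : K[X]) • e w := by
      rw [Module.AEval'.X_smul_of, hw]
      exact (e.apply_symm_apply m).symm
    rw [hm]
    exact Submodule.smul_mem_smul (Ideal.subset_span (Set.mem_singleton _)) trivial
  obtain ⟨r, hr1, hr0⟩ :=
    Submodule.exists_sub_one_mem_and_smul_eq_zero_of_fg_of_le_smul _ ⊤ hfg hin
  -- r annihilates V through aeval, and r has constant coefficient 1
  have haev : ∀ v : V, Polynomial.aeval T r v = 0 := by
    intro v
    have h0 := hr0 (e v) trivial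
    have h2 : e.symm (r • e v) = Polynomial.aeval T r • e.symm (e v) :=
      Module.AEval.of_symm_smul T r (e v)
    rw [h0] at h2
    simpa [Module.End.smul_def] using h2.symm
  have hrc : r.coeff 0 = 1 := by
    obtain ⟨g, hg⟩ := Ideal.mem_span_singleton.mp hr1
    have : r - 1 = X * g := hg
    have h0 : (r - 1).coeff 0 = 0 := by rw [this, mul_coeff_zero, coeff_X_zero, zero_mul]
    have := h0
    simp only [coeff_sub, coeff_one, sub_eq_zero] at this
    simpa using this
  have hrne : r ≠ 0 := fun h => by simp [h] at hrc
  -- normalize to a monic annihilating polynomial m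
  set m : K[X] := r * C r.leadingCoeff⁻¹ with hmdef
  have hmon : m.Monic := monic_mul_leadingCoeff_inv hrne
  have haevm : ∀ v : V, Polynomial.aeval T m v = 0 := by
    intro v
    rw [hmdef, map_mul]
    have : (Polynomial.aeval T) (C r.leadingCoeff⁻¹) = r.leadingCoeff⁻¹ • 1 := by
      simp [Algebra.algebraMap_eq_smul_one]
    rw [Module.End.mul_apply, this]
    simp only [LinearMap.smul_apply, Module.End.one_apply, map_smul]
    rw [haev v, smul_zero]
  set d := m.natDegree with hd
  -- the key recurrence
  have hrec : ∀ v : V, (T ^ d) v = -∑ i ∈ Finset.range d, m.coeff i • (T ^ i) v := by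
    intro v
    have h0 : (Polynomial.aeval T m) v = 0 := haevm v
    rw [Polynomial.aeval_eq_sum_range (p := m) T] at h0
    rw [Finset.sum_range_succ] at h0
    rw [hmon.coeff_natDegree, one_smul] at h0
    have : ((∑ i ∈ Finset.range d, m.coeff i • T ^ i) + T ^ d) v = 0 := by
      rw [← h0]
    simp only [LinearMap.add_apply, LinearMap.sum_apply, LinearMap.smul_apply] at this
    exact eq_neg_of_add_eq_zero_right this
  -- the span of T^k L for k < d is everything
  set W : Submodule K V := (Finset.range d).sup (fun k => L.map (T ^ k)) with hW
  have hWfg : W.FG := Submodule.fg_finset_sup _ _ (fun i _ => Submodule.FG.map _ ⟨s, hs⟩)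
  have hmem : ∀ n : ℕ, ∀ v ∈ L, (T ^ n) v ∈ W := by
    intro n
    induction n using Nat.strong_induction_on with
    | _ n ih =>
      intro v hv
      by_cases hnd : n < d
      · exact SetLike.le_def.mp (Finset.le_sup (f := fun k => L.map (T ^ k)) (Finset.mem_range.mpr hnd)) ⟨v, hv, rfl⟩
      · push_neg at hnd
        have hsplit : (T ^ n) v = (T ^ (n - d)) ((T ^ d) v) := by
          rw [← Module.End.mul_apply, ← pow_add]
          congr 2
          omega
        rw [hsplit, hrec v, map_neg, map_sum]
        refine W.neg_mem (W.sum_mem fun i hi => ?_)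
        rw [map_smul]
        refine W.smul_mem _ ?_
        have hcomp : (T ^ (n - d)) ((T ^ i) v) = (T ^ (n - d + i)) v := by
          rw [← Module.End.mul_apply, ← pow_add]
        rw [hcomp]
        exact ih (n - d + i) (by have := Finset.mem_range.mp hi; omega) v hv
  have hWtop : W = ⊤ := by
    refine le_antisymm le_top ?_
    rw [← hmc, Submodule.span_le]
    rintro _ ⟨_, ⟨n, rfl⟩, x, hx, rfl⟩
    exact hmem n x hx
  haveI : Module.Finite K W := Module.Finite.iff_fg.mpr hWfg
  have hlt : Module.rank K W < Cardinal.aleph0 := Module.rank_lt_aleph0 K W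
  rw [hWtop, rank_top, hdim] at hlt
  exact absurd hlt (lt_irrefl _)
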